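/- Let n > 3 be an integer. Every point of the topological boundary of Θ_n (as a subset of ℂ) is extremal: if λ lies in the boundary ∂Θ_n and γ > 1 is a real number, then γλ ∉ Θ_n. -/

import Mathlib

/-- An `n`-by-`n` real matrix is (row-)stochastic if its entries are nonnegative
and each of its rows sums to `1`. -/
def IsStochastic {n : ℕ} (A : Matrix (Fin n) (Fin n) ℝ) : Prop :=
  (∀ i j, 0 ≤ A i j) ∧ ∀ i, ∑ j, A i j = 1

/-- `Theta n` is the set of complex numbers that are an eigenvalue of some
`n`-by-`n` row-stochastic matrix. -/
def Theta (n : ℕ) : Set ℂ :=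
  {z | ∃ A : Matrix (Fin n) (Fin n) ℝ, IsStochastic A ∧
    ∃ v : Fin n → ℂ, v ≠ 0 ∧ (A.map Complex.ofReal).mulVec v = z • v}

open Matrix Finset Complex

lemma IsStochastic.one {n : ℕ} : IsStochastic (1 : Matrix (Fin n) (Fin n) ℝ) := by
  constructor
  · intro i j
    by_cases h : i = j <;> simp [Matrix.one_apply, h]
  · intro i
    simp [Matrix.one_apply]

lemma IsStochastic.mul {n : ℕ} {A B : Matrix (Fin n) (Fin n) ℝ}
    (hA : IsStochastic A) (hB : IsStochastic B) : IsStochastic (A * B) := by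
  constructor
  · intro i j
    rw [Matrix.mul_apply]
    exact Finset.sum_nonneg fun k _ => mul_nonneg (hA.1 i k) (hB.1 k j)
  · intro i
    simp only [Matrix.mul_apply]
    rw [Finset.sum_comm]
    simp_rw [← Finset.mul_sum, hB.2, mul_one]
    exact hA.2 i

lemma IsStochastic.pow {n : ℕ} {A : Matrix (Fin n) (Fin n) ℝ}
    (hA : IsStochastic A) (m : ℕ) : IsStochastic (A ^ m) := by
  induction m with
  | zero => simpa using IsStochastic.one
  | succ k ih => rw [pow_succ]; exact ih.mul hA

lemma map_pow_eig {n : ℕ} {A : Matrix (Fin n) (Fin n) ℝ} {v : Fin n → ℂ} {μ : ℂ}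
    (hv : (A.map Complex.ofReal).mulVec v = μ • v) (m : ℕ) :
    ((A ^ m).map Complex.ofReal).mulVec v = (μ ^ m) • v := by
  have hmap : (A ^ m).map Complex.ofReal = (A.map Complex.ofReal) ^ m := by
    exact map_pow (Complex.ofRealHom.mapMatrix) A m
  rw [hmap]; clear hmap
  induction m with
  | zero => simp [Matrix.one_mulVec]
  | succ k ih =>
      rw [pow_succ, ← Matrix.mulVec_mulVec, hv, Matrix.mulVec_smul, ih,
        smul_smul, pow_succ, mul_comm]

lemma mulVec_apply_eq {n : ℕ} (A : Matrix (Fin n) (Fin n) ℝ) (v : Fin n → ℂ) (i : Fin n) :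
    (A.map Complex.ofReal).mulVec v i = ∑ j, (A i j : ℂ) * v j := by
  simp [Matrix.mulVec, Matrix.map_apply, dotProduct]

lemma theta_abs_le_one {n : ℕ} {A : Matrix (Fin n) (Fin n) ℝ} (hA : IsStochastic A)
    {v : Fin n → ℂ} {μ : ℂ} (hv0 : v ≠ 0)
    (hv : (A.map Complex.ofReal).mulVec v = μ • v) : ‖μ‖ ≤ 1 := by
  obtain ⟨i, hi⟩ := Function.ne_iff.1 hv0
  obtain ⟨i₀, -, hmax⟩ := Finset.exists_max_image Finset.univ (fun k => ‖v k‖)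
    ⟨i, Finset.mem_univ i⟩
  have hpos : 0 < ‖v i₀‖ :=
    lt_of_lt_of_le (by simpa using hi) (hmax i (Finset.mem_univ i))
  have key : ‖μ‖ * ‖v i₀‖ ≤ ‖v i₀‖ := by
    have h1 : μ * v i₀ = ∑ j, (A i₀ j : ℂ) * v j := by
      rw [← mulVec_apply_eq, hv]; simp
    calc ‖μ‖ * ‖v i₀‖ = ‖μ * v i₀‖ := (norm_mul _ _).symm
      _ = ‖∑ j, (A i₀ j : ℂ) * v j‖ := by rw [h1]
      _ ≤ ∑ j, ‖(A i₀ j : ℂ) * v j‖ := norm_sum_le _ _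
      _ = ∑ j, A i₀ j * ‖v j‖ := by
          refine Finset.sum_congr rfl fun j _ => ?_
          rw [norm_mul, Complex.norm_real, Real.norm_eq_abs, _root_.abs_of_nonneg (hA.1 i₀ j)]
      _ ≤ ∑ j, A i₀ j * ‖v i₀‖ :=
          Finset.sum_le_sum fun j _ => mul_le_mul_of_nonneg_left (hmax j (Finset.mem_univ j)) (hA.1 i₀ j)
      _ = ‖v i₀‖ := by rw [← Finset.sum_mul, hA.2, one_mul]
  nlinarith [key, hpos]

lemma exists_prob_orth {n : ℕ} {A : Matrix (Fin n) (Fin n) ℝ} (hA : IsStochastic A)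
    {v : Fin n → ℂ} {μ : ℂ} (hv0 : v ≠ 0)
    (hv : (A.map Complex.ofReal).mulVec v = μ • v) (hμ1 : μ ≠ 1) :
    ∃ u : Fin n → ℝ, (∀ j, 0 ≤ u j) ∧ (∑ j, u j = 1) ∧ (∑ j, (u j : ℂ) * v j = 0) := by
  obtain ⟨i₀, hi₀⟩ := Function.ne_iff.1 hv0
  have hi₀ : v i₀ ≠ 0 := by simpa using hi₀
  have habs : ‖μ‖ ≤ 1 := theta_abs_le_one hA hv0 hv
  set w : ℕ → Fin n → ℝ := fun M j => (∑ m ∈ Finset.range (M+1), (A^m) i₀ j) / (M+1) with hw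
  have hwnn : ∀ M j, 0 ≤ w M j := fun M j =>
    div_nonneg (Finset.sum_nonneg fun m _ => (hA.pow m).1 i₀ j) (by positivity)
  have hwle : ∀ M j, w M j ≤ 1 := by
    intro M j
    rw [hw]
    simp only
    rw [div_le_one (by positivity)]
    calc (∑ m ∈ Finset.range (M+1), (A^m) i₀ j) ≤ ∑ m ∈ Finset.range (M+1), 1 :=
          Finset.sum_le_sum fun m _ => by
            calc (A^m) i₀ j ≤ ∑ k, (A^m) i₀ k :=
                  Finset.single_le_sum (fun k _ => (hA.pow m).1 i₀ k) (Finset.mem_univ j)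
              _ = 1 := (hA.pow m).2 i₀
      _ = M + 1 := by simp
  have hwsum : ∀ M, ∑ j, w M j = 1 := by
    intro M
    rw [hw]
    simp only
    rw [← Finset.sum_div, Finset.sum_comm]
    rw [Finset.sum_congr rfl fun m _ => (hA.pow m).2 i₀]
    rw [Finset.sum_const]
    simp
    field_simp
    exact Nat.cast_add_one_ne_zero M
  have hwdot : ∀ M, ∑ j, ((w M j : ℂ)) * v j
      = (∑ m ∈ Finset.range (M+1), μ^m) * v i₀ / (M+1) := by
    intro M
    have h1 : ∀ m, ∑ j, (((A^m) i₀ j : ℝ) : ℂ) * v j = μ^m * v i₀ := by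
      intro m
      rw [← mulVec_apply_eq, map_pow_eig hv m]; simp
    rw [hw]
    simp only
    push_cast
    simp_rw [div_mul_eq_mul_div, ← Finset.sum_div, Finset.sum_mul]
    rw [Finset.sum_comm]
    rw [Finset.sum_congr rfl fun m _ => h1 m, ← Finset.sum_mul]
  have hmem : ∀ M, w M ∈ Set.Icc (0 : Fin n → ℝ) 1 := fun M =>
    ⟨fun j => hwnn M j, fun j => hwle M j⟩
  obtain ⟨u, hu, φ, hφ, hlim⟩ :=
    (isCompact_Icc (a := (0 : Fin n → ℝ)) (b := 1)).tendsto_subseq hmem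
  have hcoord : ∀ j, Filter.Tendsto (fun M => w (φ M) j) Filter.atTop (nhds (u j)) :=
    fun j => (tendsto_pi_nhds.1 hlim) j
  refine ⟨u, fun j => hu.1 j, ?_, ?_⟩
  · have h1 : Filter.Tendsto (fun M => ∑ j, w (φ M) j) Filter.atTop (nhds (∑ j, u j)) :=
      tendsto_finset_sum _ fun j _ => hcoord j
    have h2 : (fun M => ∑ j, w (φ M) j) = fun _ => (1:ℝ) := funext fun M => hwsum (φ M)
    rw [h2] at h1
    exact tendsto_nhds_unique h1 tendsto_const_nhds
  · have h1 : Filter.Tendsto (fun M => ∑ j, ((w (φ M) j : ℂ)) * v j) Filter.atTop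
        (nhds (∑ j, ((u j : ℂ)) * v j)) := by
      refine tendsto_finset_sum _ fun j _ => ?_
      exact ((Complex.continuous_ofReal.tendsto _).comp (hcoord j)).mul tendsto_const_nhds
    have h2 : Filter.Tendsto (fun M => ∑ j, ((w (φ M) j : ℂ)) * v j) Filter.atTop (nhds 0) := by
      have hb : ∀ M : ℕ, ‖∑ j, ((w (φ M) j : ℂ)) * v j‖
          ≤ (2 * ‖v i₀‖ / ‖μ - 1‖) / (M + 1) := by
        intro M
        rw [hwdot]
        have hμ1' : (0:ℝ) < ‖μ - 1‖ := by
          simpa using norm_pos_iff.mpr (sub_ne_zero.2 hμ1)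
        have hgeom : ‖∑ m ∈ Finset.range (φ M + 1), μ^m‖
            ≤ 2 / ‖μ - 1‖ := by
          rw [geom_sum_eq hμ1, norm_div]
          gcongr
          have h3 : ‖μ ^ (φ M + 1)‖ ≤ 1 := by
            rw [norm_pow]; exact pow_le_one₀ (norm_nonneg μ) habs
          calc ‖μ ^ (φ M + 1) - 1‖ ≤ ‖μ ^ (φ M + 1)‖ + 1 := by
                simpa using norm_sub_le (μ ^ (φ M + 1)) 1
            _ ≤ 2 := by linarith
        have hφM : (M : ℝ) + 1 ≤ (φ M : ℝ) + 1 := by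
          have : M ≤ φ M := hφ.le_apply
          exact_mod_cast Nat.succ_le_succ this
        have hden : ‖((φ M : ℕ) : ℂ) + 1‖ = ((φ M : ℕ) : ℝ) + 1 := by
          rw [show (((φ M : ℕ) : ℂ) + 1) = (((φ M + 1 : ℕ) : ℝ) : ℂ) by push_cast; ring,
            Complex.norm_real, Real.norm_eq_abs]
          rw [_root_.abs_of_nonneg (by positivity : (0:ℝ) ≤ ((φ M + 1 : ℕ) : ℝ))]
          push_cast; ring
        rw [norm_div, norm_mul, hden]
        calc ‖∑ m ∈ Finset.range (φ M + 1), μ^m‖ * ‖v i₀‖ / (((φ M : ℕ) : ℝ) + 1)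
            ≤ (2 / ‖μ - 1‖) * ‖v i₀‖ / ((M:ℝ) + 1) := by
              gcongr
          _ = 2 * ‖v i₀‖ / ‖μ - 1‖ / ((M:ℝ) + 1) := by ring
      have hb0 : Filter.Tendsto
          (fun M : ℕ => (2 * ‖v i₀‖ / ‖μ - 1‖) / ((M:ℝ) + 1))
          Filter.atTop (nhds 0) := by
        have h := tendsto_const_div_atTop_nhds_zero_nat (𝕜 := ℝ)
          (2 * ‖v i₀‖ / ‖μ - 1‖)
        have h2 := h.comp (Filter.tendsto_add_atTop_nat 1)
        convert h2 using 2 with M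
        · simp [Function.comp]
      exact squeeze_zero_norm hb hb0
    exact tendsto_nhds_unique h1 h2

lemma theta_of_equiv {n : ℕ} {m : Type*} [Fintype m] (e : m ≃ Fin n)
    (A : Matrix m m ℝ) (h1 : ∀ i j, 0 ≤ A i j) (h2 : ∀ i, ∑ j, A i j = 1)
    (v : m → ℂ) (hv0 : v ≠ 0) (z : ℂ)
    (hv : (A.map Complex.ofReal).mulVec v = z • v) : z ∈ Theta n := by
  refine ⟨A.submatrix e.symm e.symm, ⟨fun i j => h1 _ _, fun i => ?_⟩, v ∘ e.symm, ?_, ?_⟩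
  · rw [← h2 (e.symm i)]
    exact Equiv.sum_comp e.symm (fun k => A (e.symm i) k)
  · intro h
    apply hv0
    funext k
    have : (v ∘ e.symm) (e k) = 0 := by rw [h]; rfl
    simpa using this
  · funext i
    have key := congrFun hv (e.symm i)
    simp only [Matrix.mulVec, dotProduct, Matrix.map_apply, Matrix.submatrix_apply,
      Pi.smul_apply, Function.comp] at key ⊢
    rw [← key]
    exact Equiv.sum_comp e.symm (fun k => (A (e.symm i) k : ℂ) * v k)

def B4 (a b c d : ℝ) : Matrix (Fin 4) (Fin 4) ℝ :=
  !![a, b, c, d; d, a, b, c; c, d, a, b; b, c, d, a]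

def V4 : Fin 4 → ℂ := ![1, Complex.I, -1, -Complex.I]

lemma b4_rowsum (a b c d : ℝ) (j : Fin 4) : ∑ k, B4 a b c d j k = a + b + c + d := by
  rw [Fin.sum_univ_four]
  fin_cases j <;>
    simp [B4, Matrix.cons_val_zero, Matrix.cons_val_one, Matrix.head_cons] <;> ring

lemma b4_nonneg {a b c d : ℝ} (ha : 0 ≤ a) (hb : 0 ≤ b) (hc : 0 ≤ c) (hd : 0 ≤ d)
    (j k : Fin 4) : 0 ≤ B4 a b c d j k := by
  fin_cases j <;> fin_cases k <;>
    simpa [B4, Matrix.cons_val_zero, Matrix.cons_val_one, Matrix.head_cons]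

lemma b4_eig (a b c d : ℝ) :
    ((B4 a b c d).map Complex.ofReal).mulVec V4
      = (((a - c : ℝ) : ℂ) + ((b - d : ℝ) : ℂ) * Complex.I) • V4 := by
  funext j
  simp only [Matrix.mulVec, dotProduct, Matrix.map_apply, Pi.smul_apply, smul_eq_mul]
  rw [Fin.sum_univ_four]
  fin_cases j <;>
    · simp [B4, V4, Matrix.cons_val_zero, Matrix.cons_val_one, Matrix.head_cons]
      simp [Complex.ext_iff]
      constructor <;> ring

lemma square_weights (x y : ℝ) (h : |x| + |y| ≤ 1) :
    ∃ a b c d : ℝ, 0 ≤ a ∧ 0 ≤ b ∧ 0 ≤ c ∧ 0 ≤ d ∧ a + b + c + d = 1 ∧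
      a - c = x ∧ b - d = y := by
  refine ⟨max x 0 + (1 - |x| - |y|)/2, max y 0, max (-x) 0 + (1 - |x| - |y|)/2,
    max (-y) 0, ?_, ?_, ?_, ?_, ?_, ?_, ?_⟩
  · have : 0 ≤ max x 0 := le_max_right _ _
    linarith
  · exact le_max_right _ _
  · have : 0 ≤ max (-x) 0 := le_max_right _ _
    linarith
  · exact le_max_right _ _
  · have h1 : max x 0 + max (-x) 0 = |x| := by
      rcases le_total 0 x with h' | h'
      · rw [max_eq_left h', max_eq_right (by linarith), _root_.abs_of_nonneg h']; ring
      · rw [max_eq_right h', max_eq_left (by linarith), _root_.abs_of_nonpos h']; ring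
    have h2 : max y 0 + max (-y) 0 = |y| := by
      rcases le_total 0 y with h' | h'
      · rw [max_eq_left h', max_eq_right (by linarith), _root_.abs_of_nonneg h']; ring
      · rw [max_eq_right h', max_eq_left (by linarith), _root_.abs_of_nonpos h']; ring
    linarith
  · rcases le_total 0 x with h' | h'
    · rw [max_eq_left h', max_eq_right (by linarith)]; ring
    · rw [max_eq_right h', max_eq_left (by linarith)]; ring
  · rcases le_total 0 y with h' | h'
    · rw [max_eq_left h', max_eq_right (by linarith)]; ring
    · rw [max_eq_right h', max_eq_left (by linarith)]; ring

lemma square_mem_theta {n : ℕ} (hn : 3 < n) {z : ℂ} (hz : |z.re| + |z.im| ≤ 1) :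
    z ∈ Theta n := by
  obtain ⟨a, b, c, d, hann, hbnn, hcnn, hdnn, hsum, hac, hbd⟩ := square_weights z.re z.im hz
  have hz' : z = ((a - c : ℝ) : ℂ) + ((b - d : ℝ) : ℂ) * Complex.I := by
    rw [hac, hbd]
    exact (Complex.re_add_im z).symm
  have hcard : 4 + (n - 4) = n := by omega
  let e : (Fin 4 ⊕ Fin (n - 4)) ≃ Fin n := finSumFinEquiv.trans (finCongr hcard)
  let M : Matrix (Fin 4 ⊕ Fin (n - 4)) (Fin 4 ⊕ Fin (n - 4)) ℝ :=
    Matrix.fromBlocks (B4 a b c d) 0 0 1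
  let v : (Fin 4 ⊕ Fin (n - 4)) → ℂ := Sum.elim V4 (fun _ => 0)
  refine theta_of_equiv e M ?_ ?_ v ?_ z ?_
  · rintro (i | i) (j | j)
    · exact b4_nonneg hann hbnn hcnn hdnn i j
    · exact le_refl 0
    · exact le_refl 0
    · show (0:ℝ) ≤ (1 : Matrix (Fin (n-4)) (Fin (n-4)) ℝ) i j
      rw [Matrix.one_apply]
      split <;> norm_num
  · rintro (i | i)
    · rw [Fintype.sum_sum_type]
      simp only [M, Matrix.fromBlocks_apply₁₁, Matrix.fromBlocks_apply₁₂, Matrix.zero_apply]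
      rw [b4_rowsum]
      simp [hsum]
    · rw [Fintype.sum_sum_type]
      simp only [M, Matrix.fromBlocks_apply₂₁, Matrix.fromBlocks_apply₂₂, Matrix.zero_apply]
      simp [Matrix.one_apply]
  · intro h
    have : v (Sum.inl 0) = 0 := by rw [h]; rfl
    simp [v, V4] at this
  · rw [hz']
    have hmap : M.map Complex.ofReal
        = Matrix.fromBlocks ((B4 a b c d).map Complex.ofReal) 0 0 1 := by
      ext i j
      rcases i with i | i <;> rcases j with j | j <;>
        simp [M, Matrix.map_apply, Matrix.one_apply, apply_ite]
    rw [hmap]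
    rw [show v = Sum.elim V4 (fun _ => (0:ℂ)) from rfl]
    have h0 : (fun _ => (0:ℂ)) = (0 : Fin (n-4) → ℂ) := rfl
    rw [h0, Matrix.fromBlocks_mulVec]
    simp only [Sum.elim_comp_inl, Sum.elim_comp_inr]
    rw [b4_eig]
    funext i
    rcases i with i | i <;>
      simp [Matrix.mulVec_zero, Matrix.one_mulVec]

lemma map_ofReal_smul_add {n : ℕ} (c : ℝ) (A : Matrix (Fin n) (Fin n) ℝ) :
    (c • A).map Complex.ofReal = (c : ℂ) • (A.map Complex.ofReal) := by
  ext i j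
  simp [Matrix.map_apply]

lemma four_combo_mem_theta {n : ℕ} {A₀ A₁ A₂ A₃ : Matrix (Fin n) (Fin n) ℝ}
    (h₀ : IsStochastic A₀) (h₁ : IsStochastic A₁) (h₂ : IsStochastic A₂)
    (h₃ : IsStochastic A₃)
    {v : Fin n → ℂ} (hv0 : v ≠ 0) {μ₀ μ₁ μ₂ μ₃ : ℂ}
    (e₀ : (A₀.map Complex.ofReal).mulVec v = μ₀ • v)
    (e₁ : (A₁.map Complex.ofReal).mulVec v = μ₁ • v)
    (e₂ : (A₂.map Complex.ofReal).mulVec v = μ₂ • v)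
    (e₃ : (A₃.map Complex.ofReal).mulVec v = μ₃ • v)
    {c₀ c₁ c₂ c₃ : ℝ} (hc₀ : 0 ≤ c₀) (hc₁ : 0 ≤ c₁) (hc₂ : 0 ≤ c₂) (hc₃ : 0 ≤ c₃)
    (hcs : c₀ + c₁ + c₂ + c₃ = 1) :
    ((c₀ : ℂ) * μ₀ + (c₁ : ℂ) * μ₁ + (c₂ : ℂ) * μ₂ + (c₃ : ℂ) * μ₃) ∈ Theta n := by
  refine ⟨c₀ • A₀ + c₁ • A₁ + c₂ • A₂ + c₃ • A₃, ⟨?_, ?_⟩, v, hv0, ?_⟩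
  · intro i j
    simp only [Matrix.add_apply, Matrix.smul_apply, smul_eq_mul]
    have := h₀.1 i j; have := h₁.1 i j; have := h₂.1 i j; have := h₃.1 i j
    positivity
  · intro i
    simp only [Matrix.add_apply, Matrix.smul_apply, smul_eq_mul]
    rw [Finset.sum_add_distrib, Finset.sum_add_distrib, Finset.sum_add_distrib,
      ← Finset.mul_sum, ← Finset.mul_sum, ← Finset.mul_sum, ← Finset.mul_sum,
      h₀.2, h₁.2, h₂.2, h₃.2]
    simpa using hcs
  · have hmap : (c₀ • A₀ + c₁ • A₁ + c₂ • A₂ + c₃ • A₃).map Complex.ofReal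
        = (c₀ : ℂ) • (A₀.map Complex.ofReal) + (c₁ : ℂ) • (A₁.map Complex.ofReal)
          + (c₂ : ℂ) • (A₂.map Complex.ofReal) + (c₃ : ℂ) • (A₃.map Complex.ofReal) := by
      ext i j
      simp [Matrix.map_apply]
    rw [hmap, Matrix.add_mulVec, Matrix.add_mulVec, Matrix.add_mulVec,
      Matrix.smul_mulVec, Matrix.smul_mulVec, Matrix.smul_mulVec,
      Matrix.smul_mulVec, e₀, e₁, e₂, e₃]
    funext i
    simp only [Pi.add_apply, Pi.smul_apply, smul_eq_mul]
    ring

set_option maxHeartbeats 2000000 in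
lemma smul_mem_interior_theta {n : ℕ} (hn : 3 < n) {μ : ℂ} (hμ : μ ∈ Theta n)
    {t : ℝ} (ht0 : 0 < t) (ht1 : t < 1) : (t : ℂ) * μ ∈ interior (Theta n) := by
  obtain ⟨A, hA, v, hv0, hv⟩ := hμ
  have habs : ‖μ‖ ≤ 1 := theta_abs_le_one hA hv0 hv
  by_cases him : μ.im = 0
  · -- real case : use the open square
    set U : Set ℂ := {z | |z.re| + |z.im| < 1} with hU
    have hUopen : IsOpen U := by
      have : Continuous fun z : ℂ => |z.re| + |z.im| :=
        (Complex.continuous_re.abs).add (Complex.continuous_im.abs)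
      exact isOpen_Iio.preimage this
    have hUsub : U ⊆ Theta n := fun z hz => square_mem_theta hn (le_of_lt hz)
    have hmem : (t : ℂ) * μ ∈ U := by
      have h1 : ((t : ℂ) * μ).re = t * μ.re := by simp
      have h2 : ((t : ℂ) * μ).im = t * μ.im := by simp
      rw [hU, Set.mem_setOf_eq, h1, h2, him, mul_zero, abs_zero, add_zero, abs_mul,
        _root_.abs_of_nonneg ht0.le]
      have hre : |μ.re| ≤ 1 := le_trans (Complex.abs_re_le_norm μ) habs
      nlinarith
    exact interior_maximal hUsub hUopen hmem
  · -- nonreal case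
    have hμ1 : μ ≠ 1 := by
      intro h; rw [h] at him; simp at him
    obtain ⟨u, hunn, husum, hudot⟩ := exists_prob_orth hA hv0 hv hμ1
    set S : Matrix (Fin n) (Fin n) ℝ := Matrix.of fun _ j => u j with hSdef
    have hS : IsStochastic S := ⟨fun i j => hunn j, fun i => husum⟩
    have hvS : (S.map Complex.ofReal).mulVec v = (0 : ℂ) • v := by
      funext i
      rw [mulVec_apply_eq]
      simpa [S] using hudot
    have hvA2 : ((A ^ 2).map Complex.ofReal).mulVec v = (μ ^ 2) • v := map_pow_eig hv 2
    have hvI : ((1 : Matrix (Fin n) (Fin n) ℝ).map Complex.ofReal).mulVec v = (1 : ℂ) • v := by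
      rw [Matrix.map_one _ Complex.ofReal_zero Complex.ofReal_one, Matrix.one_mulVec, one_smul]
    have hspos : 0 < μ.re ^ 2 + μ.im ^ 2 := by
      have h2 : 0 < μ.im ^ 2 := lt_of_le_of_ne (sq_nonneg _) (Ne.symm (pow_ne_zero 2 him))
      nlinarith [sq_nonneg μ.re]
    have haμnn : 0 ≤ ‖μ‖ := norm_nonneg μ
    set aμ : ℝ := ‖μ‖ with haμ
    set sq2 : ℝ := μ.re ^ 2 + μ.im ^ 2 with hsq2
    set ε : ℝ := min ((1 - t) / (2 * (1 + sq2 + 2 * aμ))) (t / (1 + 2 * aμ)) with hε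
    have hεpos : 0 < ε :=
      lt_min (div_pos (by linarith) (by positivity)) (div_pos ht0 (by positivity))
    have hε1 : ε + ε * sq2 + 2 * (ε * aμ) ≤ (1 - t) / 2 := by
      have h : ε ≤ (1 - t) / (2 * (1 + sq2 + 2 * aμ)) := min_le_left _ _
      have h' := (le_div_iff₀ (show (0:ℝ) < 2 * (1 + sq2 + 2 * aμ) by positivity)).1 h
      nlinarith [h']
    have hε2 : ε + 2 * (ε * aμ) ≤ t := by
      have h : ε ≤ t / (1 + 2 * aμ) := min_le_right _ _
      nlinarith [(le_div_iff₀ (show (0:ℝ) < 1 + 2 * aμ by positivity)).1 h]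
    have hre : |μ.re| ≤ aμ := Complex.abs_re_le_norm μ
    clear_value aμ sq2 ε
    clear hε haμ
    -- weight functions
    set c₂ : ℂ → ℝ := fun z =>
      ε + (μ.re * z.im - μ.im * z.re) / (2 * sq2 * μ.im) with hc₂
    set c₃ : ℂ → ℝ := fun z =>
      ε * sq2 - (μ.re * z.im - μ.im * z.re) / (2 * μ.im) with hc₃
    set c₁ : ℂ → ℝ := fun z =>
      (μ.re * (z.re - c₂ z * (μ.re ^ 2 - μ.im ^ 2) - c₃ z)
        + μ.im * (z.im - c₂ z * (2 * μ.re * μ.im))) / sq2 with hc₁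
    set c₀ : ℂ → ℝ := fun z => 1 - c₁ z - c₂ z - c₃ z with hc₀
    have hsq2ne : sq2 ≠ 0 := ne_of_gt hspos
    have hid : ∀ z : ℂ, ((c₁ z : ℂ)) * μ + ((c₂ z : ℂ)) * μ ^ 2 + ((c₃ z : ℂ)) = z := by
      intro z
      rw [Complex.ext_iff]
      have hmure : (μ ^ 2).re = μ.re ^ 2 - μ.im ^ 2 := by
        rw [pow_two, Complex.mul_re]; ring
      have hmuim : (μ ^ 2).im = 2 * μ.re * μ.im := by
        rw [pow_two, Complex.mul_im]; ring
      constructor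
      · simp only [Complex.add_re, Complex.mul_re, Complex.ofReal_re, Complex.ofReal_im,
          hmure, hmuim, zero_mul, sub_zero, hc₁, hc₂, hc₃, hsq2]
        field_simp
        ring
      · simp only [Complex.add_im, Complex.mul_im, Complex.ofReal_re, Complex.ofReal_im,
          hmure, hmuim, zero_mul, add_zero, hc₁, hc₂, hc₃, hsq2]
        field_simp
        ring
    -- continuity
    have hc₂c : Continuous c₂ := by
      rw [hc₂]; fun_prop
    have hc₃c : Continuous c₃ := by
      rw [hc₃]; fun_prop
    have hc₁c : Continuous c₁ := by
      rw [hc₁]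
      apply Continuous.div_const
      fun_prop
    have hc₀c : Continuous c₀ := by
      rw [hc₀]; fun_prop
    -- values at z₀
    set z₀ : ℂ := (t : ℂ) * μ with hz₀
    have hz₀re : z₀.re = t * μ.re := by simp [hz₀]
    have hz₀im : z₀.im = t * μ.im := by simp [hz₀]
    have hqz₀ : μ.re * z₀.im - μ.im * z₀.re = 0 := by
      rw [hz₀re, hz₀im]; ring
    have hc₂z₀ : c₂ z₀ = ε := by rw [hc₂]; simp only [hqz₀]; simp
    have hc₃z₀ : c₃ z₀ = ε * sq2 := by rw [hc₃]; simp only [hqz₀]; simp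
    have hc₁z₀ : c₁ z₀ = t - 2 * ε * μ.re := by
      rw [hc₁]
      simp only [hc₂z₀, hc₃z₀, hz₀re, hz₀im, hsq2]
      field_simp
      ring
    -- the open set
    set U : Set ℂ := {z | 0 < c₀ z ∧ 0 < c₁ z ∧ 0 < c₂ z ∧ 0 < c₃ z} with hUdef
    have hUopen : IsOpen U := by
      have h0 : IsOpen {z : ℂ | 0 < c₀ z} := isOpen_lt continuous_const hc₀c
      have h1 : IsOpen {z : ℂ | 0 < c₁ z} := isOpen_lt continuous_const hc₁c
      have h2 : IsOpen {z : ℂ | 0 < c₂ z} := isOpen_lt continuous_const hc₂c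
      have h3 : IsOpen {z : ℂ | 0 < c₃ z} := isOpen_lt continuous_const hc₃c
      have hUeq : U = ({z : ℂ | 0 < c₀ z} ∩ {z : ℂ | 0 < c₁ z})
          ∩ ({z : ℂ | 0 < c₂ z} ∩ {z : ℂ | 0 < c₃ z}) := by
        ext z
        simp [hUdef, Set.mem_inter_iff, and_assoc]
      rw [hUeq]
      exact (h0.inter h1).inter (h2.inter h3)
    have hb1 : ε * μ.re ≤ ε * aμ :=
      mul_le_mul_of_nonneg_left (abs_le.1 hre).2 hεpos.le
    have hb2 : -(ε * aμ) ≤ ε * μ.re := by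
      have := mul_le_mul_of_nonneg_left (abs_le.1 hre).1 hεpos.le
      linarith
    have p2 : 0 < c₂ z₀ := by rw [hc₂z₀]; exact hεpos
    have p3 : 0 < c₃ z₀ := by rw [hc₃z₀]; exact mul_pos hεpos hspos
    have p1 : 0 < c₁ z₀ := by
      rw [hc₁z₀]; linarith
    have p0 : 0 < c₀ z₀ := by
      have hcc : c₀ z₀ = 1 - c₁ z₀ - c₂ z₀ - c₃ z₀ := by rw [hc₀]
      rw [hcc, hc₁z₀, hc₂z₀, hc₃z₀]
      linarith
    have hz₀U : z₀ ∈ U := ⟨p0, p1, p2, p3⟩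
    have hUsub : U ⊆ Theta n := by
      rintro z ⟨h0, h1, h2, h3⟩
      have hsum : c₀ z + c₁ z + c₂ z + c₃ z = 1 := by rw [hc₀]; ring
      have hthis := four_combo_mem_theta hS hA (hA.pow 2) IsStochastic.one hv0
        hvS hv hvA2 hvI h0.le h1.le h2.le h3.le hsum
      have heq : ((c₀ z : ℂ)) * 0 + ((c₁ z : ℂ)) * μ + ((c₂ z : ℂ)) * μ ^ 2
          + ((c₃ z : ℂ)) * 1 = z := by
        rw [mul_zero, zero_add, mul_one]
        exact hid z
      rwa [heq] at hthis
    exact interior_maximal hUsub hUopen hz₀U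

/-- For `n > 3`, every point of the topological boundary of `Θ_n` is extremal. -/
theorem frontier_theta_extremal (n : ℕ) (hn : 3 < n) (l : ℂ) (hl : l ∈ frontier (Theta n))
    (γ : ℝ) (hγ : 1 < γ) : (γ : ℂ) * l ∉ Theta n := by
  intro h
  have hγ0 : (0:ℝ) < γ := by linarith
  have ht0 : 0 < γ⁻¹ := by positivity
  have ht1 : γ⁻¹ < 1 := by
    rw [inv_lt_one_iff₀]
    right; exact hγ
  have hint := smul_mem_interior_theta hn h ht0 ht1
  have heq : ((γ⁻¹ : ℝ) : ℂ) * ((γ : ℂ) * l) = l := by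
    push_cast
    have : (γ : ℂ) ≠ 0 := by exact_mod_cast ne_of_gt hγ0
    field_simp
  rw [heq] at hint
  exact hl.2 hint
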